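/- Let A and B be nonempty closed subsets of ℝⁿ and x* ∈ A ∩ B. If A and B intersect linearly regularly at x*, i.e. N_A(x*) ∩ (−N_B(x*)) = {0}, then A and B intersect 0-separably at x*: there exist γ > 0 and a neighborhood U of x* such that ⟨b − a⁺, b⁺ − a⁺⟩ ≤ (1 − γ)‖b − a⁺‖‖b⁺ − a⁺‖ for every building block b → a⁺ → b⁺ with b, a⁺, b⁺ ∈ U, and ⟨a − b, a⁺ − b⟩ ≤ (1 − γ)‖a − b‖‖a⁺ − b‖ for every building block a → b → a⁺ with a, b, a⁺ ∈ U. -/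

import Mathlib

open Set Metric Filter Topology RealInnerProductSpace
open scoped ENNReal

variable {E : Type*} [NormedAddCommGroup E] [InnerProductSpace ℝ E]

/-- The (possibly set-valued) metric projection onto a set `S`. -/
noncomputable def projSet (S : Set E) (x : E) : Set E :=
  {s | s ∈ S ∧ ‖x - s‖ = Metric.infDist x S}

/-- The proximal normal cone to `S` at `s`. -/
def proxNormalCone (S : Set E) (s : E) : Set E :=
  {v | ∃ l : ℝ, 0 ≤ l ∧ ∃ u : E, v = l • u ∧ s ∈ projSet S (s + u)}

/-- The limiting (Mordukhovich) normal cone to `S` at `x`. -/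
def limitingNormalCone (S : Set E) (x : E) : Set E :=
  {v | ∃ (s : ℕ → E) (w : ℕ → E), (∀ k, s k ∈ S) ∧
    Filter.Tendsto s Filter.atTop (nhds x) ∧
    (∀ k, w k ∈ proxNormalCone S (s k)) ∧ Filter.Tendsto w Filter.atTop (nhds v)}

lemma mem_prox_unit {S : Set E} {x s : E} (h : s ∈ projSet S x) :
    ‖x - s‖⁻¹ • (x - s) ∈ proxNormalCone S s := by
  refine ⟨‖x - s‖⁻¹, inv_nonneg.2 (norm_nonneg _), x - s, rfl, ?_⟩
  have hxe : s + (x - s) = x := by abel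
  rw [hxe]; exact h

lemma combo {γ : ℝ} {x y : E} (h : (1 - γ) * ‖x‖ * ‖y‖ < ⟪x, y⟫) :
    x ≠ 0 ∧ y ≠ 0 ∧ 1 - γ < ⟪‖x‖⁻¹ • x, ‖y‖⁻¹ • y⟫ := by
  have hx : x ≠ 0 := by rintro rfl; simp at h
  have hy : y ≠ 0 := by rintro rfl; simp at h
  refine ⟨hx, hy, ?_⟩
  have hxn : 0 < ‖x‖ := norm_pos_iff.2 hx
  have hyn : 0 < ‖y‖ := norm_pos_iff.2 hy
  have hpos : (0:ℝ) < ‖x‖⁻¹ * ‖y‖⁻¹ := by positivity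
  have key := mul_lt_mul_of_pos_left h hpos
  rw [real_inner_smul_left, real_inner_smul_right]
  calc 1 - γ = ‖x‖⁻¹ * ‖y‖⁻¹ * ((1 - γ) * ‖x‖ * ‖y‖) := by field_simp
    _ < ‖x‖⁻¹ * ‖y‖⁻¹ * ⟪x, y⟫ := key
    _ = ‖x‖⁻¹ * (‖y‖⁻¹ * ⟪x, y⟫) := by ring

theorem stmt1 {n : ℕ} (A B : Set (EuclideanSpace ℝ (Fin n)))
    (hAne : A.Nonempty) (hBne : B.Nonempty) (hAc : IsClosed A) (hBc : IsClosed B)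
    (xs : EuclideanSpace ℝ (Fin n)) (hxs : xs ∈ A ∩ B)
    (hlr : limitingNormalCone A xs ∩ (-(limitingNormalCone B xs)) = {0}) :
    ∃ γ > (0:ℝ), ∃ U ∈ nhds xs,
      (∀ b a' b' : EuclideanSpace ℝ (Fin n), b ∈ B → a' ∈ projSet A b → b' ∈ projSet B a' →
        b ∈ U → a' ∈ U → b' ∈ U →
        ⟪b - a', b' - a'⟫ ≤ (1 - γ) * ‖b - a'‖ * ‖b' - a'‖) ∧
      (∀ a b a' : EuclideanSpace ℝ (Fin n), a ∈ A → b ∈ projSet B a → a' ∈ projSet A b →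
        a ∈ U → b ∈ U → a' ∈ U →
        ⟪a - b, a' - b⟫ ≤ (1 - γ) * ‖a - b‖ * ‖a' - b‖) := by
  by_contra hcon
  have key : ∀ k : ℕ, ∃ p q u v : EuclideanSpace ℝ (Fin n),
      p ∈ A ∧ q ∈ B ∧ u ∈ proxNormalCone A p ∧ v ∈ proxNormalCone B q ∧
      u ∈ Metric.sphere (0 : EuclideanSpace ℝ (Fin n)) 1 ∧ ‖v‖ = 1 ∧
      ⟪u, v⟫ < -(1 - 1/((k:ℝ)+1)) ∧
      dist p xs < 1/((k:ℝ)+1) ∧ dist q xs < 1/((k:ℝ)+1) := by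
    intro k
    set γ : ℝ := 1/((k:ℝ)+1) with hγdef
    have hγ : 0 < γ := by positivity
    by_cases hP2 : ∀ a b a' : EuclideanSpace ℝ (Fin n), a ∈ A → b ∈ projSet B a →
        a' ∈ projSet A b → a ∈ Metric.ball xs γ → b ∈ Metric.ball xs γ →
        a' ∈ Metric.ball xs γ → ⟪a - b, a' - b⟫ ≤ (1 - γ) * ‖a - b‖ * ‖a' - b‖
    · have hP1 : ¬ (∀ b a' b' : EuclideanSpace ℝ (Fin n), b ∈ B → a' ∈ projSet A b →
          b' ∈ projSet B a' → b ∈ Metric.ball xs γ → a' ∈ Metric.ball xs γ →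
          b' ∈ Metric.ball xs γ → ⟪b - a', b' - a'⟫ ≤ (1 - γ) * ‖b - a'‖ * ‖b' - a'‖) := by
        intro hP1
        exact hcon ⟨γ, hγ, Metric.ball xs γ, Metric.ball_mem_nhds _ hγ, hP1, hP2⟩
      push_neg at hP1
      obtain ⟨b, a', b', hbB, ha', hb', hbU, ha'U, hb'U, hlt⟩ := hP1
      obtain ⟨hx0, hy0, hip⟩ := combo hlt
      refine ⟨a', b', ‖b - a'‖⁻¹ • (b - a'), ‖a' - b'‖⁻¹ • (a' - b'), ha'.1, hb'.1,
        mem_prox_unit ha', mem_prox_unit hb', ?_, ?_, ?_, mem_ball.1 ha'U, mem_ball.1 hb'U⟩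
      · simpa [mem_sphere_zero_iff_norm] using (norm_smul_inv_norm hx0 : ‖‖b - a'‖⁻¹ • (b - a')‖ = 1)
      · have hz : a' - b' ≠ 0 := sub_ne_zero.2 (sub_ne_zero.1 hy0).symm
        exact norm_smul_inv_norm hz
      · have he : a' - b' = -(b' - a') := by abel
        rw [he, norm_neg, smul_neg, inner_neg_right]
        linarith [hip]
    · push_neg at hP2
      obtain ⟨a, b, a', haA, hb, ha', haU, hbU, ha'U, hlt⟩ := hP2
      obtain ⟨hx0, hy0, hip⟩ := combo hlt
      refine ⟨a', b, ‖b - a'‖⁻¹ • (b - a'), ‖a - b‖⁻¹ • (a - b), ha'.1, hb.1,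
        mem_prox_unit ha', mem_prox_unit hb, ?_, ?_, ?_, mem_ball.1 ha'U, mem_ball.1 hbU⟩
      · have hz : b - a' ≠ 0 := sub_ne_zero.2 (sub_ne_zero.1 hy0).symm
        simpa [mem_sphere_zero_iff_norm] using (norm_smul_inv_norm hz : ‖‖b - a'‖⁻¹ • (b - a')‖ = 1)
      · exact norm_smul_inv_norm hx0
      · have he : b - a' = -(a' - b) := by abel
        rw [he, norm_neg, smul_neg, inner_neg_left]
        rw [real_inner_comm]
        linarith [hip]
  choose p q u v hpA hqB hu hv husph hvn hinner hpd hqd using key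
  have hsc : IsCompact (Metric.sphere (0 : EuclideanSpace ℝ (Fin n)) 1) :=
    isCompact_sphere _ _
  obtain ⟨z, hz, φ, hφ, hzt⟩ := hsc.tendsto_subseq husph
  -- the sum u k + v k tends to 0 along φ
  have htends0 : Tendsto (fun k : ℕ => (2:ℝ)/((k:ℝ)+1)) atTop (𝓝 0) := by
    have := tendsto_one_div_add_atTop_nhds_zero_nat.const_mul (2:ℝ)
    simpa [mul_one_div, div_eq_mul_inv] using this
  have htends : Tendsto (fun k : ℕ => Real.sqrt (2/((k:ℝ)+1))) atTop (𝓝 0) := by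
    have := (Real.continuous_sqrt.tendsto 0).comp htends0
    simpa only [Function.comp_def, Real.sqrt_zero] using this
  have hb2 : ∀ k : ℕ, ‖u k + v k‖ ≤ Real.sqrt (2/((k:ℝ)+1)) := by
    intro k
    have hu1 : ‖u k‖ = 1 := by simpa [mem_sphere_zero_iff_norm] using husph k
    have h2 : ‖u k + v k‖^2 ≤ 2/((k:ℝ)+1) := by
      rw [norm_add_sq_real, hu1, hvn k]
      have := hinner k
      have h1 : (2:ℝ)/((k:ℝ)+1) = 2*(1/((k:ℝ)+1)) := by ring
      rw [h1]; linarith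
    calc ‖u k + v k‖ = Real.sqrt (‖u k + v k‖^2) := (Real.sqrt_sq (norm_nonneg _)).symm
      _ ≤ Real.sqrt (2/((k:ℝ)+1)) := Real.sqrt_le_sqrt h2
  have hsum : Tendsto (fun k => u (φ k) + v (φ k)) atTop (𝓝 0) := by
    rw [tendsto_zero_iff_norm_tendsto_zero]
    refine squeeze_zero (fun k => norm_nonneg _) (fun k => ?_) htends
    calc ‖u (φ k) + v (φ k)‖ ≤ Real.sqrt (2/((φ k : ℝ)+1)) := hb2 (φ k)
      _ ≤ Real.sqrt (2/((k:ℝ)+1)) := by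
          gcongr
          exact_mod_cast hφ.le_apply
  have hvt : Tendsto (fun k => v (φ k)) atTop (𝓝 (-z)) := by
    have := hsum.sub hzt
    simpa using this
  have hpt : Tendsto p atTop (𝓝 xs) := by
    rw [tendsto_iff_dist_tendsto_zero]
    exact squeeze_zero (fun k => dist_nonneg) (fun k => (hpd k).le)
      tendsto_one_div_add_atTop_nhds_zero_nat
  have hqt : Tendsto q atTop (𝓝 xs) := by
    rw [tendsto_iff_dist_tendsto_zero]
    exact squeeze_zero (fun k => dist_nonneg) (fun k => (hqd k).le)
      tendsto_one_div_add_atTop_nhds_zero_nat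
  have hzA : z ∈ limitingNormalCone A xs :=
    ⟨fun k => p (φ k), fun k => u (φ k), fun k => hpA (φ k),
      hpt.comp hφ.tendsto_atTop, fun k => hu (φ k), hzt⟩
  have hzB : -z ∈ limitingNormalCone B xs :=
    ⟨fun k => q (φ k), fun k => v (φ k), fun k => hqB (φ k),
      hqt.comp hφ.tendsto_atTop, fun k => hv (φ k), hvt⟩
  have hzmem : z ∈ limitingNormalCone A xs ∩ (-(limitingNormalCone B xs)) :=
    ⟨hzA, by simpa [Set.mem_neg] using hzB⟩
  rw [hlr] at hzmem
  have hz0 : z = 0 := hzmem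
  have hz1 : ‖z‖ = 1 := by simpa [mem_sphere_zero_iff_norm] using hz
  rw [hz0] at hz1
  simp at hz1
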